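/- The force-free conditions (a) l(ln|κ|) + dl♭(n,l) + ds♭(l,s) = 0 and (b) dl♭(l, α♯) = 0 are independent of the choices made: they are invariant under any change of null foliation adapted chart (x^a → x̄^a with ∂x^a/∂x̄^i = 0 for a = 3,4, i = 1,2, under which u·κ is invariant), under the rescaling l → f l, n → (1/f) n for any nonvanishing smooth function f (under which κ → κ/f), and under the shifts s → s + g̃ l, α → α + h l♭ with the corresponding change of n, for any smooth functions g̃, h. -/

import Mathlib

noncomputable section

namespace FFE

/-- Points of the chart domain `U_p ⊆ M` of a spacetime, in coordinates
`(x¹,…,x⁴)` (indexed here by `0,…,3`, so `x³ ↦ 2` and `x⁴ ↦ 3`). -/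
abbrev Pt : Type := Fin 4 → ℝ

/-- Scalar fields. -/
abbrev Sc : Type := Pt → ℝ

/-- Vector fields, given by their chart components. -/
abbrev Vec : Type := Fin 4 → Sc

/-- Covector fields (1-forms), given by their chart components. -/
abbrev Cov : Type := Fin 4 → Sc

/-- 2-forms, given by their (antisymmetric) chart components. -/
abbrev Form2 : Type := Fin 4 → Fin 4 → Sc

/-- Partial derivative along the `i`-th coordinate. -/
def pd (i : Fin 4) (f : Sc) : Sc := fun p => fderiv ℝ f p (Pi.single i 1)

/-- Smoothness of a scalar field. -/
def Smooth (f : Sc) : Prop := ContDiff ℝ (⊤ : ℕ∞) f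

/-- Directional derivative of a scalar field along a vector field. -/
def act (v : Vec) (f : Sc) : Sc := ∑ i, v i * pd i f

/-- Lie bracket of vector fields. -/
def bracket (v w : Vec) : Vec := fun μ => act v (w μ) - act w (v μ)

/-- Exterior derivative of a 1-form, evaluated on two vector fields:
`dω(v,w) = (∂_μ ω_ν − ∂_ν ω_μ) v^μ w^ν`. -/
def dOne (ω : Cov) (v w : Vec) : Sc :=
  ∑ μ, ∑ ν, (pd μ (ω ν) - pd ν (ω μ)) * v μ * w ν

/-- `log |f|`. -/
def logabs (f : Sc) : Sc := fun p => Real.log |f p|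

/-- A (smooth) Lorentzian metric of signature `(-1,1,1,1)`, given in a chart by its
covariant components `gdown`, contravariant components `ginv`, and volume factor
`vol = √(−det g)`. -/
structure Lorentzian where
  gdown : Fin 4 → Fin 4 → Sc
  ginv : Fin 4 → Fin 4 → Sc
  vol : Sc
  smooth_gdown : ∀ μ ν, Smooth (gdown μ ν)
  smooth_ginv : ∀ μ ν, Smooth (ginv μ ν)
  smooth_vol : Smooth vol
  symm_gdown : ∀ μ ν, gdown μ ν = gdown ν μ
  symm_ginv : ∀ μ ν, ginv μ ν = ginv ν μ
  inv_gdown : ∀ μ ν p, (∑ ρ, ginv μ ρ p * gdown ρ ν p) = if μ = ν then 1 else 0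
  vol_pos : ∀ p, 0 < vol p
  vol_sq : ∀ p, vol p ^ 2 = -Matrix.det (Matrix.of fun μ ν => gdown μ ν p)
  signature : ∀ p, ∃ e : Fin 4 → Fin 4 → ℝ, ∀ i j,
    (∑ μ, ∑ ν, gdown μ ν p * e i μ * e j ν) =
      if i = j then (if i = 0 then -1 else 1) else 0

namespace Lorentzian

variable (g : Lorentzian)

/-- Lowering an index: `v ↦ v♭`. -/
def flat (v : Vec) : Cov := fun μ => ∑ ν, g.gdown μ ν * v ν

/-- Raising an index: `ω ↦ ω♯`. -/
def sharp (ω : Cov) : Vec := fun μ => ∑ ν, g.ginv μ ν * ω ν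

/-- Metric pairing `g(v,w)` of vector fields. -/
def inner (v w : Vec) : Sc := ∑ μ, ∑ ν, g.gdown μ ν * v μ * w ν

/-- Christoffel symbols of the Levi-Civita connection. -/
def christoffel (μ ν ρ : Fin 4) : Sc := fun p =>
  (1 / 2) * ∑ σ, g.ginv μ σ p *
    (pd ν (g.gdown σ ρ) p + pd ρ (g.gdown σ ν) p - pd σ (g.gdown ν ρ) p)

/-- Covariant derivative `∇_v w` of the Levi-Civita connection. -/
def nabla (v w : Vec) : Vec := fun μ =>
  (∑ ν, v ν * pd ν (w μ)) + ∑ ν, ∑ ρ, g.christoffel μ ν ρ * v ν * w ρ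

/-- Divergence `∇_μ X^μ = (1/√(−g)) ∂_μ (√(−g) X^μ)`. -/
def div (v : Vec) : Sc := fun p =>
  (g.vol p)⁻¹ * ∑ μ, pd μ (fun q => g.vol q * v μ q) p

/-- Raising both indices of a 2-form. -/
def up2 (F : Form2) : Form2 := fun μ ν => ∑ ρ, ∑ σ, g.ginv μ ρ * g.ginv ν σ * F ρ σ

/-- The full contraction `F_{μν} F^{μν}`. -/
def contract2 (F : Form2) : Sc := ∑ μ, ∑ ν, F μ ν * g.up2 F μ ν

/-- The current density vector `j = *(d*F)`, in components
`j^μ = (1/√(−g)) ∂_ν (√(−g) F^{μν})`. -/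
def current (F : Form2) : Vec := fun μ => fun p =>
  (g.vol p)⁻¹ * ∑ ν, pd ν (fun q => g.vol q * g.up2 F μ ν q) p

/-- `F` is a null 2-form: `F_{μν}F^{μν} = 0`. -/
def IsNull (F : Form2) : Prop := g.contract2 F = 0

/-- The force-free condition `i_{j♯} F = 0` for the current `j` of `F`. -/
def ForceFree (F : Form2) : Prop := ∀ ν, (∑ μ, F μ ν * g.current F μ) = 0

end Lorentzian

/-- `dF = 0` for a 2-form. -/
def Closed (F : Form2) : Prop :=
  ∀ μ ν ρ, pd μ (F ν ρ) + pd ν (F ρ μ) + pd ρ (F μ ν) = 0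

/-- The Levi-Civita alternating symbol. -/
def eps (μ ν ρ σ : Fin 4) : ℝ :=
  Matrix.det (Matrix.of fun i j => if (![μ, ν, ρ, σ] i) = j then (1 : ℝ) else 0)

/-- Hodge star of a 2-form: `(*F)_{μν} = ½ √(−g) ε_{μνρσ} F^{ρσ}`. -/
def Lorentzian.hodge2 (g : Lorentzian) (F : Form2) : Form2 := fun μ ν => fun p =>
  (1 / 2) * g.vol p * ∑ ρ, ∑ σ, eps μ ν ρ σ * g.up2 F ρ σ p

/-- Exterior derivative of a 2-form (components of the 3-form `dG`). -/
def dTwo (G : Form2) : Fin 4 → Fin 4 → Fin 4 → Sc := fun μ ν ρ =>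
  pd μ (G ν ρ) + pd ν (G ρ μ) + pd ρ (G μ ν)

/-- The (scalar density representing the) wedge product of a 3-form with a 1-form. -/
def wedge31 (J : Fin 4 → Fin 4 → Fin 4 → Sc) (ω : Cov) : Sc := fun p =>
  ∑ μ, ∑ ν, ∑ ρ, ∑ σ, eps μ ν ρ σ * J μ ν ρ p * ω σ p

/-- The chart is adapted to a *null* foliation: on the leaves (the level sets of
`(x³,x⁴)`) the metric is degenerate, i.e. `g³³g⁴⁴ − (g³⁴)² = 0`. -/
def Lorentzian.NullAdapted (g : Lorentzian) : Prop :=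
  ∀ p, g.ginv 2 2 p * g.ginv 3 3 p - (g.ginv 2 3 p) ^ 2 = 0

/-- `M^r = g^{r3} g^{34} − g^{33} g^{r4}` (coordinates `x³,x⁴` are indices `2,3`). -/
def Mvec (g : Lorentzian) : Vec := fun r =>
  g.ginv r 2 * g.ginv 2 3 - g.ginv 2 2 * g.ginv r 3

/-- `N^r = g^{r3} g^{44} − g^{34} g^{r4}`. -/
def Nvec (g : Lorentzian) : Vec := fun r =>
  g.ginv r 2 * g.ginv 3 3 - g.ginv 2 3 * g.ginv r 3

/-- A null foliation adapted frame `(s, l, α♯, n)`: `l, n` null, `s, α♯` unit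
spacelike, `g(n,l) = −1`, all other frame inner products zero, spanning `TM`. -/
structure Frame (g : Lorentzian) (s l a n : Vec) : Prop where
  smooth_s : ∀ μ, Smooth (s μ)
  smooth_l : ∀ μ, Smooth (l μ)
  smooth_a : ∀ μ, Smooth (a μ)
  smooth_n : ∀ μ, Smooth (n μ)
  l_null : g.inner l l = 0
  n_null : g.inner n n = 0
  s_unit : g.inner s s = 1
  a_unit : g.inner a a = 1
  n_l : g.inner n l = -1
  n_s : g.inner n s = 0
  n_a : g.inner n a = 0
  l_s : g.inner l s = 0
  l_a : g.inner l a = 0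
  s_a : g.inner s a = 0
  spans : ∀ (p : Pt) (v : Fin 4 → ℝ), ∃ c : Fin 4 → ℝ,
    ∀ μ, v μ = c 0 * s μ p + c 1 * l μ p + c 2 * a μ p + c 3 * n μ p

/-- `l` is a pregeodesic vector field: `∇_l l` is everywhere proportional to `l`. -/
def Pregeodesic (g : Lorentzian) (l : Vec) : Prop :=
  ∃ f : Sc, g.nabla l l = fun μ => f * l μ

/-- The null expansion scalar `θ = ½[g(∇_s l, s) + g(∇_{α♯} l, α♯)]`. -/
def theta (g : Lorentzian) (l s a : Vec) : Sc :=
  (1 / 2 : Sc) * (g.inner (g.nabla s l) s + g.inner (g.nabla a l) a)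

/-- The foliation admits an equipartition of null mean curvature w.r.t. `l`:
`θ = g(∇_s l, s)`. -/
def Equipartition (g : Lorentzian) (l s a : Vec) : Prop :=
  theta g l s a = g.inner (g.nabla s l) s

/-- `l` admits a uniform equipartition of null mean curvature:
`g(∇_s l, α♯) + g(∇_{α♯} l, s) = 0`. -/
def UniformEquipartition (g : Lorentzian) (l s a : Vec) : Prop :=
  g.inner (g.nabla s l) a + g.inner (g.nabla a l) s = 0

/-- `v` lies in the kernel of the 2-form `F`. -/
def InKernel (F : Form2) (v : Vec) : Prop := ∀ μ, (∑ ν, F μ ν * v ν) = 0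

/-- The kernel of `F` consists at each point exactly of the vectors tangent to the
leaves of the adapted chart (those with vanishing `x³`- and `x⁴`-components). -/
def KernelExact (F : Form2) : Prop :=
  ∀ (p : Pt) (v : Fin 4 → ℝ),
    (∀ μ, (∑ ν, F μ ν p * v ν) = 0) ↔ (v 2 = 0 ∧ v 3 = 0)

/-- The kernel of `F` is at each point exactly the span of `v` and `w`. -/
def KernelSpan (F : Form2) (v w : Vec) : Prop :=
  ∀ (p : Pt) (x : Fin 4 → ℝ),
    (∀ μ, (∑ ν, F μ ν p * x ν) = 0) ↔ ∃ c d : ℝ, ∀ μ, x μ = c * v μ p + d * w μ p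

/-- `u` is a function of `(x³,x⁴)` alone (constant along the leaves). -/
def LeafConstant (u : Sc) : Prop := pd 0 u = 0 ∧ pd 1 u = 0

/-- The 2-form `F = u dx³ ∧ dx⁴`. -/
def chartF (u : Sc) : Form2 := fun μ ν =>
  u * ((if μ = 2 ∧ ν = 3 then (1 : Sc) else 0) - if μ = 3 ∧ ν = 2 then (1 : Sc) else 0)

/-- The transition factor `κ = (α₃ l♭₄ − α₄ l♭₃)⁻¹`. -/
def kappa (g : Lorentzian) (a l : Vec) : Sc :=
  (g.flat a 2 * g.flat l 3 - g.flat a 3 * g.flat l 2)⁻¹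

/-- The 2-form `F = (u·κ) α ∧ l♭` (with `α = a♭`). -/
def frameF (g : Lorentzian) (a l : Vec) (u : Sc) : Form2 := fun μ ν =>
  u * kappa g a l * (g.flat a μ * g.flat l ν - g.flat a ν * g.flat l μ)

end FFE

namespace FFE

/-- Force-free condition (a): `l(ln|κ|) + dl♭(n,l) + ds♭(l,s) = 0`. -/
def condA (g : Lorentzian) (κ : Sc) (l s n : Vec) : Prop :=
  act l (logabs κ) + dOne (g.flat l) n l + dOne (g.flat s) l s = 0

/-- Force-free condition (b): `dl♭(l, α♯) = 0`. -/
def condB (g : Lorentzian) (l a : Vec) : Prop := dOne (g.flat l) l a = 0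

-- ===== auxiliary lemmas =====

lemma smoothD {f : Sc} (hf : Smooth f) (p : Pt) : DifferentiableAt ℝ f p :=
  (hf.differentiable (by simp)).differentiableAt

lemma pd_mul_apply {f h : Sc} {p : Pt} (hf : DifferentiableAt ℝ f p)
    (hh : DifferentiableAt ℝ h p) (i : Fin 4) :
    pd i (f * h) p = pd i f p * h p + f p * pd i h p := by
  have hd : fderiv ℝ (f * h) p = f p • fderiv ℝ h p + h p • fderiv ℝ f p := fderiv_mul hf hh
  show fderiv ℝ (f * h) p (Pi.single i 1) = _
  rw [hd, ContinuousLinearMap.add_apply, ContinuousLinearMap.smul_apply,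
    ContinuousLinearMap.smul_apply, smul_eq_mul, smul_eq_mul]
  show f p * pd i h p + h p * pd i f p = _
  ring

lemma pd_add_apply {f h : Sc} {p : Pt} (hf : DifferentiableAt ℝ f p)
    (hh : DifferentiableAt ℝ h p) (i : Fin 4) :
    pd i (f + h) p = pd i f p + pd i h p := by
  have hd : fderiv ℝ (f + h) p = fderiv ℝ f p + fderiv ℝ h p := fderiv_add hf hh
  show fderiv ℝ (f + h) p (Pi.single i 1) = _
  rw [hd, ContinuousLinearMap.add_apply]; rfl

lemma pd_sub_apply {f h : Sc} {p : Pt} (hf : DifferentiableAt ℝ f p)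
    (hh : DifferentiableAt ℝ h p) (i : Fin 4) :
    pd i (f - h) p = pd i f p - pd i h p := by
  have hd : fderiv ℝ (f - h) p = fderiv ℝ f p - fderiv ℝ h p := fderiv_sub hf hh
  show fderiv ℝ (f - h) p (Pi.single i 1) = _
  rw [hd, ContinuousLinearMap.sub_apply]; rfl

lemma logabs_eq (f : Sc) : logabs f = fun q => Real.log (f q) :=
  funext fun q => Real.log_abs _

lemma pd_logabs {f : Sc} {p : Pt} (hf : DifferentiableAt ℝ f p) (h0 : f p ≠ 0) (i : Fin 4) :
    pd i (logabs f) p = (f p)⁻¹ * pd i f p := by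
  have H : HasFDerivAt (fun q => Real.log (f q)) ((f p)⁻¹ • fderiv ℝ f p) p :=
    hf.hasFDerivAt.log h0
  rw [logabs_eq]
  show fderiv ℝ (fun q => Real.log (f q)) p (Pi.single i 1) = _
  rw [H.fderiv, ContinuousLinearMap.smul_apply, smul_eq_mul]; rfl

lemma differentiableAt_logabs {f : Sc} {p : Pt} (hf : DifferentiableAt ℝ f p) (h0 : f p ≠ 0) :
    DifferentiableAt ℝ (logabs f) p := by
  rw [logabs_eq]
  exact (hf.hasFDerivAt.log h0).differentiableAt

lemma act_apply (v : Vec) (f : Sc) (p : Pt) : act v f p = ∑ i, v i p * pd i f p := by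
  simp [act, Finset.sum_apply]

lemma flat_apply (g : Lorentzian) (v : Vec) (μ : Fin 4) (p : Pt) :
    g.flat v μ p = ∑ ν, g.gdown μ ν p * v ν p := by
  simp [Lorentzian.flat, Finset.sum_apply]

lemma smooth_flat (g : Lorentzian) {v : Vec} (hv : ∀ μ, Smooth (v μ)) (μ : Fin 4) :
    Smooth (g.flat v μ) := by
  have h : Smooth (fun p => ∑ ν, g.gdown μ ν p * v ν p) :=
    ContDiff.sum fun ν _ => (g.smooth_gdown μ ν).mul (hv ν)
  have he : g.flat v μ = fun p => ∑ ν, g.gdown μ ν p * v ν p :=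
    funext fun p => flat_apply g v μ p
  rw [he]; exact h

lemma inner_apply (g : Lorentzian) (v w : Vec) (p : Pt) :
    g.inner v w p = ∑ μ, ∑ ν, g.gdown μ ν p * v μ p * w ν p := by
  simp [Lorentzian.inner, Finset.sum_apply]

lemma pair_flat (g : Lorentzian) (v w : Vec) (p : Pt) :
    (∑ ν, g.flat v ν p * w ν p) = g.inner w v p := by
  simp only [flat_apply, inner_apply, Finset.sum_mul]
  exact Finset.sum_congr rfl fun μ _ => Finset.sum_congr rfl fun ν _ => by ring

lemma inner_symm (g : Lorentzian) (v w : Vec) (p : Pt) :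
    g.inner v w p = g.inner w v p := by
  simp only [inner_apply]
  rw [Finset.sum_comm]
  exact Finset.sum_congr rfl fun ν _ => Finset.sum_congr rfl fun μ _ => by
    rw [congrFun (g.symm_gdown μ ν) p]; ring

lemma dOne_apply (ω : Cov) (v w : Vec) (p : Pt) :
    dOne ω v w p = ∑ μ, ∑ ν, (pd μ (ω ν) p - pd ν (ω μ) p) * v μ p * w ν p := by
  simp [dOne, Finset.sum_apply]

lemma dOne_self (ω : Cov) (v : Vec) (p : Pt) : dOne ω v v p = 0 := by
  simp only [dOne_apply, Fin.sum_univ_four]; ring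

lemma dOne_antisymm (ω : Cov) (v w : Vec) (p : Pt) : dOne ω v w p = -dOne ω w v p := by
  simp only [dOne_apply, Fin.sum_univ_four]; ring

lemma dOne_smul_v (ω : Cov) (c : Sc) (v w : Vec) (p : Pt) :
    dOne ω (fun μ => c * v μ) w p = c p * dOne ω v w p := by
  simp only [dOne_apply, Pi.mul_apply, Fin.sum_univ_four]; ring

lemma dOne_smul_w (ω : Cov) (c : Sc) (v w : Vec) (p : Pt) :
    dOne ω v (fun μ => c * w μ) p = c p * dOne ω v w p := by
  simp only [dOne_apply, Pi.mul_apply, Fin.sum_univ_four]; ring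

lemma dOne_add_smul_w (ω : Cov) (c : Sc) (v w x : Vec) (p : Pt) :
    dOne ω v (fun μ => w μ + c * x μ) p = dOne ω v w p + c p * dOne ω v x p := by
  simp only [dOne_apply, Pi.mul_apply, Pi.add_apply, Fin.sum_univ_four]; ring

lemma dOne_smul_left (g : Lorentzian) (f : Sc) (ω : Cov) (hf : Smooth f)
    (hω : ∀ ν, Smooth (ω ν)) (v w : Vec) (p : Pt) :
    dOne (fun ν => f * ω ν) v w p
      = f p * dOne ω v w p + act v f p * (∑ ν, ω ν p * w ν p)
        - act w f p * (∑ ν, ω ν p * v ν p) := by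
  have hpd : ∀ μ ν : Fin 4, pd μ (f * ω ν) p = pd μ f p * ω ν p + f p * pd μ (ω ν) p :=
    fun μ ν => pd_mul_apply (smoothD hf p) (smoothD (hω ν) p) μ
  simp only [dOne_apply, act_apply, hpd, Fin.sum_univ_four]
  ring

lemma dOne_add_left {ω₁ ω₂ : Cov} (hω₁ : ∀ ν, Smooth (ω₁ ν)) (hω₂ : ∀ ν, Smooth (ω₂ ν))
    (v w : Vec) (p : Pt) :
    dOne (fun ν => ω₁ ν + ω₂ ν) v w p = dOne ω₁ v w p + dOne ω₂ v w p := by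
  have hpd : ∀ μ ν : Fin 4, pd μ (ω₁ ν + ω₂ ν) p = pd μ (ω₁ ν) p + pd μ (ω₂ ν) p :=
    fun μ ν => pd_add_apply (smoothD (hω₁ ν) p) (smoothD (hω₂ ν) p) μ
  simp only [dOne_apply, hpd, Fin.sum_univ_four]
  ring

lemma flat_smul (g : Lorentzian) (f : Sc) (l : Vec) :
    g.flat (fun μ => f * l μ) = fun ν => f * g.flat l ν := by
  funext ν p
  rw [Pi.mul_apply, flat_apply, flat_apply, Finset.mul_sum]
  exact Finset.sum_congr rfl fun μ _ => by rw [Pi.mul_apply]; ring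

lemma flat_add_smul (g : Lorentzian) (c : Sc) (s l : Vec) :
    g.flat (fun μ => s μ + c * l μ) = fun ν => g.flat s ν + c * g.flat l ν := by
  funext ν p
  rw [Pi.add_apply, Pi.mul_apply, flat_apply, flat_apply, flat_apply, Finset.mul_sum,
    ← Finset.sum_add_distrib]
  exact Finset.sum_congr rfl fun μ _ => by rw [Pi.add_apply, Pi.mul_apply]; ring

lemma kappa_denom_ne_zero (g : Lorentzian) (s l a n : Vec) (hframe : Frame g s l a n)
    (hl2 : l 2 = 0) (hl3 : l 3 = 0) (hs2 : s 2 = 0) (hs3 : s 3 = 0) (p : Pt) :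
    g.flat a 2 p * g.flat l 3 p - g.flat a 3 p * g.flat l 2 p ≠ 0 := by
  -- frame inner-product values at p
  have hsa : g.inner s a p = 0 := by have := congrFun hframe.s_a p; simpa using this
  have hla : g.inner l a p = 0 := by have := congrFun hframe.l_a p; simpa using this
  have haa : g.inner a a p = 1 := by have := congrFun hframe.a_unit p; simpa using this
  have hna : g.inner n a p = 0 := by have := congrFun hframe.n_a p; simpa using this
  have hsl : g.inner s l p = 0 := by
    rw [inner_symm]; have := congrFun hframe.l_s p; simpa using this
  have hll : g.inner l l p = 0 := by have := congrFun hframe.l_null p; simpa using this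
  have hal : g.inner a l p = 0 := by
    rw [inner_symm]; have := congrFun hframe.l_a p; simpa using this
  have hnl : g.inner n l p = -1 := by have := congrFun hframe.n_l p; simpa using this
  -- the key linear-independence claim
  have key : ∀ c d : ℝ, c * g.flat a 2 p + d * g.flat l 2 p = 0 →
      c * g.flat a 3 p + d * g.flat l 3 p = 0 → c = 0 ∧ d = 0 := by
    intro c d h2 h3
    obtain ⟨u, hu⟩ := hframe.spans p (Pi.single 2 1)
    obtain ⟨v, hv⟩ := hframe.spans p (Pi.single 3 1)
    have pairsum : ∀ (x : Vec) (e : Fin 4 → ℝ) (ux : Fin 4 → ℝ),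
        (∀ μ, e μ = ux 0 * s μ p + ux 1 * l μ p + ux 2 * a μ p + ux 3 * n μ p) →
        (∑ ν, g.flat x ν p * e ν)
          = ux 0 * g.inner s x p + ux 1 * g.inner l x p
            + ux 2 * g.inner a x p + ux 3 * g.inner n x p := by
      intro x e ux hux
      calc (∑ ν, g.flat x ν p * e ν)
          = ux 0 * (∑ ν, g.flat x ν p * s ν p) + ux 1 * (∑ ν, g.flat x ν p * l ν p)
            + ux 2 * (∑ ν, g.flat x ν p * a ν p) + ux 3 * (∑ ν, g.flat x ν p * n ν p) := by
            simp only [hux, Fin.sum_univ_four]; ring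
        _ = _ := by rw [pair_flat, pair_flat, pair_flat, pair_flat]
    -- (u 2) * c - (u 3) * d = 0  and same for v
    have hsum2a := pairsum a (Pi.single 2 1) u hu
    have hsum2l := pairsum l (Pi.single 2 1) u hu
    have hsum3a := pairsum a (Pi.single 3 1) v hv
    have hsum3l := pairsum l (Pi.single 3 1) v hv
    have hsing2a : (∑ ν, g.flat a ν p * (Pi.single (2:Fin 4) (1:ℝ) : Fin 4 → ℝ) ν) = g.flat a 2 p := by
      simp [Fin.sum_univ_four, Pi.single_apply]
    have hsing2l : (∑ ν, g.flat l ν p * (Pi.single (2:Fin 4) (1:ℝ) : Fin 4 → ℝ) ν) = g.flat l 2 p := by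
      simp [Fin.sum_univ_four, Pi.single_apply]
    have hsing3a : (∑ ν, g.flat a ν p * (Pi.single (3:Fin 4) (1:ℝ) : Fin 4 → ℝ) ν) = g.flat a 3 p := by
      simp [Fin.sum_univ_four, Pi.single_apply]
    have hsing3l : (∑ ν, g.flat l ν p * (Pi.single (3:Fin 4) (1:ℝ) : Fin 4 → ℝ) ν) = g.flat l 3 p := by
      simp [Fin.sum_univ_four, Pi.single_apply]
    have e5 : u 2 * c - u 3 * d = 0 := by
      have h2' := h2
      rw [← hsing2a, ← hsing2l, hsum2a, hsum2l, hsa, hla, haa, hna, hsl, hll, hal, hnl] at h2'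
      linarith
    have e6 : v 2 * c - v 3 * d = 0 := by
      have h3' := h3
      rw [← hsing3a, ← hsing3l, hsum3a, hsum3l, hsa, hla, haa, hna, hsl, hll, hal, hnl] at h3'
      linarith
    -- component equations
    have hszero : ∀ μ : Fin 4, s μ p = 0 → l μ p = 0 → True := fun _ _ _ => trivial
    have hs2p : s 2 p = 0 := by have := congrFun hs2 p; simpa using this
    have hs3p : s 3 p = 0 := by have := congrFun hs3 p; simpa using this
    have hl2p : l 2 p = 0 := by have := congrFun hl2 p; simpa using this
    have hl3p : l 3 p = 0 := by have := congrFun hl3 p; simpa using this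
    have e1 : u 2 * a 2 p + u 3 * n 2 p = 1 := by
      have := hu 2; rw [hs2p, hl2p] at this; simp [Pi.single_apply] at this; linarith
    have e2 : u 2 * a 3 p + u 3 * n 3 p = 0 := by
      have := hu 3; rw [hs3p, hl3p] at this; simp [Pi.single_apply] at this; linarith
    have e3 : v 2 * a 2 p + v 3 * n 2 p = 0 := by
      have := hv 2; rw [hs2p, hl2p] at this; simp [Pi.single_apply] at this; linarith
    have e4 : v 2 * a 3 p + v 3 * n 3 p = 1 := by
      have := hv 3; rw [hs3p, hl3p] at this; simp [Pi.single_apply] at this; linarith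
    have hdet : (u 2 * v 3 - u 3 * v 2) * (a 2 p * n 3 p - a 3 p * n 2 p) = 1 := by
      linear_combination (v 2 * a 3 p + v 3 * n 3 p) * e1 - (v 2 * a 2 p + v 3 * n 2 p) * e2 + e4
    have hc : c * (u 2 * v 3 - u 3 * v 2) = 0 := by linear_combination v 3 * e5 - u 3 * e6
    have hd : d * (u 2 * v 3 - u 3 * v 2) = 0 := by linear_combination v 2 * e5 - u 2 * e6
    constructor
    · linear_combination (a 2 p * n 3 p - a 3 p * n 2 p) * hc - c * hdet
    · linear_combination (a 2 p * n 3 p - a 3 p * n 2 p) * hd - d * hdet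
  intro hW
  obtain ⟨hL3, hA3'⟩ := key (g.flat l 3 p) (-(g.flat a 3 p))
    (by linear_combination hW) (by ring)
  have hA3 : g.flat a 3 p = 0 := by linarith [neg_eq_zero.mp hA3']
  obtain ⟨hL2, hA2'⟩ := key (g.flat l 2 p) (-(g.flat a 2 p))
    (by ring) (by rw [hA3, hL3]; ring)
  have hA2 : g.flat a 2 p = 0 := by linarith [neg_eq_zero.mp hA2']
  obtain ⟨h10, -⟩ := key 1 0 (by rw [hA2]; ring) (by rw [hA3]; ring)
  exact one_ne_zero h10

lemma kappa_apply (g : Lorentzian) (a l : Vec) (p : Pt) :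
    kappa g a l p = (g.flat a 2 p * g.flat l 3 p - g.flat a 3 p * g.flat l 2 p)⁻¹ := by
  simp [kappa]

lemma kappa_ne_zero (g : Lorentzian) (s l a n : Vec) (hframe : Frame g s l a n)
    (hl2 : l 2 = 0) (hl3 : l 3 = 0) (hs2 : s 2 = 0) (hs3 : s 3 = 0) (p : Pt) :
    kappa g a l p ≠ 0 := by
  rw [kappa_apply]
  exact inv_ne_zero (kappa_denom_ne_zero g s l a n hframe hl2 hl3 hs2 hs3 p)

lemma kappa_diff (g : Lorentzian) (s l a n : Vec) (hframe : Frame g s l a n)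
    (hl2 : l 2 = 0) (hl3 : l 3 = 0) (hs2 : s 2 = 0) (hs3 : s 3 = 0) (p : Pt) :
    DifferentiableAt ℝ (kappa g a l) p := by
  have hW : Smooth (fun q => g.flat a 2 q * g.flat l 3 q - g.flat a 3 q * g.flat l 2 q) :=
    (((smooth_flat g hframe.smooth_a 2).mul (smooth_flat g hframe.smooth_l 3)).sub
      ((smooth_flat g hframe.smooth_a 3).mul (smooth_flat g hframe.smooth_l 2)))
  have : DifferentiableAt ℝ
      (fun q => (g.flat a 2 q * g.flat l 3 q - g.flat a 3 q * g.flat l 2 q)⁻¹) p :=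
    (smoothD hW p).inv (kappa_denom_ne_zero g s l a n hframe hl2 hl3 hs2 hs3 p)
  exact this

lemma act_smul (c : Sc) (v : Vec) (φ : Sc) (p : Pt) :
    act (fun μ => c * v μ) φ p = c p * act v φ p := by
  simp only [act_apply, Pi.mul_apply, Fin.sum_univ_four]; ring

lemma act_logabs_div {κ f : Sc} (v : Vec) (p : Pt)
    (hκd : DifferentiableAt ℝ κ p) (hfd : DifferentiableAt ℝ f p)
    (hκ0 : ∀ q, κ q ≠ 0) (hf0 : ∀ q, f q ≠ 0) :
    act v (logabs (κ * f⁻¹)) p = act v (logabs κ) p - (f p)⁻¹ * act v f p := by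
  have hsplit : logabs (κ * f⁻¹) = logabs κ - logabs f := by
    funext q
    show Real.log |κ q * (f q)⁻¹| = Real.log |κ q| - Real.log |f q|
    rw [abs_mul, abs_inv,
      Real.log_mul (abs_ne_zero.mpr (hκ0 q)) (inv_ne_zero (abs_ne_zero.mpr (hf0 q))),
      Real.log_inv]
    ring
  have hd1 := differentiableAt_logabs hκd (hκ0 p)
  have hd2 := differentiableAt_logabs hfd (hf0 p)
  rw [hsplit]
  simp only [act_apply, pd_sub_apply hd1 hd2, pd_logabs hfd (hf0 p), Fin.sum_univ_four]
  ring

lemma condA_iff (g : Lorentzian) (κ : Sc) (l s n : Vec) :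
    condA g κ l s n ↔
      ∀ p, act l (logabs κ) p + dOne (g.flat l) n l p + dOne (g.flat s) l s p = 0 := by
  unfold condA
  rw [funext_iff]
  exact forall_congr' fun p => by simp

lemma condB_iff (g : Lorentzian) (l a : Vec) :
    condB g l a ↔ ∀ p, dOne (g.flat l) l a p = 0 := by
  unfold condB
  rw [funext_iff]
  exact forall_congr' fun p => by simp

/-- The force-free conditions (a) and (b) are independent of the
choices made: invariant under a change of null foliation adapted chart (under
which `κ → κ/D` with `D` the Jacobian factor, constant along the leaves, while the
frame is unchanged); under the rescaling `l → f l`, `n → n/f`, `κ → κ/f`; and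
under the shifts `s → s + g̃ l`, `α → α + h l♭` (i.e. `α♯ → α♯ + h l`) with
`n → n + ((g̃² + h²)/2) l + g̃ s + h α♯`. -/
theorem conditions_invariant (g : Lorentzian) (s l a n : Vec)
    (hframe : Frame g s l a n)
    (hl2 : l 2 = 0) (hl3 : l 3 = 0) (hs2 : s 2 = 0) (hs3 : s 3 = 0)
    (κ : Sc) (hκ : κ = kappa g a l) :
    (∀ D : Sc, Smooth D → (∀ p, D p ≠ 0) → act l D = 0 → act s D = 0 →
      ((condA g (κ * D⁻¹) l s n ∧ condB g l a) ↔
        (condA g κ l s n ∧ condB g l a))) ∧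
    (∀ f : Sc, Smooth f → (∀ p, f p ≠ 0) →
      ((condA g (κ * f⁻¹) (fun μ => f * l μ) s (fun μ => f⁻¹ * n μ) ∧
          condB g (fun μ => f * l μ) a) ↔
        (condA g κ l s n ∧ condB g l a))) ∧
    (∀ gt h : Sc, Smooth gt → Smooth h →
      ((condA g κ l (fun μ => s μ + gt * l μ)
            (fun μ => n μ + ((gt * gt + h * h) / 2) * l μ + gt * s μ + h * a μ) ∧
          condB g l (fun μ => a μ + h * l μ)) ↔
        (condA g κ l s n ∧ condB g l a))) := by
  -- basic facts about κ
  have hκ0 : ∀ p, κ p ≠ 0 := by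
    intro p; rw [hκ]; exact kappa_ne_zero g s l a n hframe hl2 hl3 hs2 hs3 p
  have hκd : ∀ p, DifferentiableAt ℝ κ p := by
    intro p; rw [hκ]; exact kappa_diff g s l a n hframe hl2 hl3 hs2 hs3 p
  -- pointwise pair values
  have Pll : ∀ p, (∑ ν, g.flat l ν p * l ν p) = 0 := by
    intro p; rw [pair_flat]; simpa using congrFun hframe.l_null p
  have Pls : ∀ p, (∑ ν, g.flat l ν p * s ν p) = 0 := by
    intro p; rw [pair_flat, inner_symm]; simpa using congrFun hframe.l_s p
  have Pla : ∀ p, (∑ ν, g.flat l ν p * a ν p) = 0 := by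
    intro p; rw [pair_flat, inner_symm]; simpa using congrFun hframe.l_a p
  have Pln : ∀ p, (∑ ν, g.flat l ν p * n ν p) = -1 := by
    intro p; rw [pair_flat]; simpa using congrFun hframe.n_l p
  have hsl : ∀ μ, Smooth (g.flat l μ) := smooth_flat g hframe.smooth_l
  have hss : ∀ μ, Smooth (g.flat s μ) := smooth_flat g hframe.smooth_s
  refine ⟨?_, ?_, ?_⟩
  · -- Part 1 : chart change
    intro D hD hD0 hactl _hacts
    have hterm : ∀ p, act l (logabs (κ * D⁻¹)) p = act l (logabs κ) p := by
      intro p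
      rw [act_logabs_div l p (hκd p) (smoothD hD p) hκ0 hD0]
      have h0 : act l D p = 0 := by simpa using congrFun hactl p
      rw [h0]; ring
    have hAiff : condA g (κ * D⁻¹) l s n ↔ condA g κ l s n := by
      rw [condA_iff, condA_iff]
      exact forall_congr' fun p => by rw [hterm p]
    rw [hAiff]
  · -- Part 2 : rescaling
    intro f hf hf0
    -- condA computation
    have hAeq : ∀ p,
        act (fun μ => f * l μ) (logabs (κ * f⁻¹)) p
          + dOne (g.flat fun μ => f * l μ) (fun μ => f⁻¹ * n μ) (fun μ => f * l μ) p
          + dOne (g.flat s) (fun μ => f * l μ) s p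
        = f p * (act l (logabs κ) p + dOne (g.flat l) n l p + dOne (g.flat s) l s p) := by
      intro p
      have T1 : act (fun μ => f * l μ) (logabs (κ * f⁻¹)) p
          = f p * act l (logabs κ) p - act l f p := by
        rw [act_smul, act_logabs_div l p (hκd p) (smoothD hf p) hκ0 hf0]
        field_simp [hf0 p]
      have hflat : g.flat (fun μ => f * l μ) = fun ν => f * g.flat l ν := flat_smul g f l
      have T2 : dOne (g.flat fun μ => f * l μ) (fun μ => f⁻¹ * n μ) (fun μ => f * l μ) p
          = f p * dOne (g.flat l) n l p + act l f p := by
        rw [hflat, dOne_smul_left g f (g.flat l) hf hsl]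
        have e1 : dOne (g.flat l) (fun μ => f⁻¹ * n μ) (fun μ => f * l μ) p
            = (f p)⁻¹ * (f p * dOne (g.flat l) n l p) := by
          rw [dOne_smul_v]
          rw [show dOne (g.flat l) n (fun μ => f * l μ) p = f p * dOne (g.flat l) n l p from
            dOne_smul_w (g.flat l) f n l p]
          rfl
        have e2 : (∑ ν, g.flat l ν p * (fun μ => f * l μ) ν p) = f p * 0 := by
          simp only [Pi.mul_apply]
          rw [show (∑ ν, g.flat l ν p * (f p * l ν p)) = f p * ∑ ν, g.flat l ν p * l ν p by
            rw [Finset.mul_sum]; exact Finset.sum_congr rfl fun ν _ => by ring]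
          rw [Pll p]
        have e3 : (∑ ν, g.flat l ν p * (fun μ => f⁻¹ * n μ) ν p) = (f p)⁻¹ * (-1) := by
          simp only [Pi.mul_apply, Pi.inv_apply]
          rw [show (∑ ν, g.flat l ν p * ((f p)⁻¹ * n ν p)) = (f p)⁻¹ * ∑ ν, g.flat l ν p * n ν p by
            rw [Finset.mul_sum]; exact Finset.sum_congr rfl fun ν _ => by ring]
          rw [Pln p]
        rw [e1, e2, e3, act_smul, act_smul]
        field_simp [hf0 p]
        ring
      have T3 : dOne (g.flat s) (fun μ => f * l μ) s p = f p * dOne (g.flat s) l s p :=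
        dOne_smul_v (g.flat s) f l s p
      rw [T1, T2, T3]; ring
    have hBeq : ∀ p, dOne (g.flat fun μ => f * l μ) (fun μ => f * l μ) a p
        = f p ^ 2 * dOne (g.flat l) l a p := by
      intro p
      have hflat : g.flat (fun μ => f * l μ) = fun ν => f * g.flat l ν := flat_smul g f l
      rw [hflat, dOne_smul_left g f (g.flat l) hf hsl]
      have e2 : (∑ ν, g.flat l ν p * (fun μ => f * l μ) ν p) = 0 := by
        simp only [Pi.mul_apply]
        rw [show (∑ ν, g.flat l ν p * (f p * l ν p)) = f p * ∑ ν, g.flat l ν p * l ν p by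
          rw [Finset.mul_sum]; exact Finset.sum_congr rfl fun ν _ => by ring]
        rw [Pll p]; ring
      rw [dOne_smul_v, e2, Pla p]
      ring
    constructor
    · rintro ⟨hA, hB⟩
      constructor
      · rw [condA_iff]; intro p
        have := (condA_iff ..).mp hA p
        rw [hAeq p] at this
        exact (mul_eq_zero.mp this).resolve_left (hf0 p)
      · rw [condB_iff]; intro p
        have := (condB_iff ..).mp hB p
        rw [hBeq p] at this
        rcases mul_eq_zero.mp this with h | h
        · exact absurd h (pow_ne_zero 2 (hf0 p))
        · exact h
    · rintro ⟨hA, hB⟩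
      constructor
      · rw [condA_iff]; intro p
        rw [hAeq p, (condA_iff ..).mp hA p, mul_zero]
      · rw [condB_iff]; intro p
        rw [hBeq p, (condB_iff ..).mp hB p, mul_zero]
  · -- Part 3 : shifts
    intro gt h hgt hh
    -- condB is literally unchanged
    have hBeq : ∀ p, dOne (g.flat l) l (fun μ => a μ + h * l μ) p = dOne (g.flat l) l a p := by
      intro p
      rw [dOne_add_smul_w, dOne_self, mul_zero, add_zero]
    have hAeq : ∀ p,
        act l (logabs κ) p
          + dOne (g.flat l) (fun μ => n μ + ((gt * gt + h * h) / 2) * l μ + gt * s μ + h * a μ) l p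
          + dOne (g.flat fun μ => s μ + gt * l μ) l (fun μ => s μ + gt * l μ) p
        = act l (logabs κ) p + dOne (g.flat l) n l p + dOne (g.flat s) l s p
          - h p * dOne (g.flat l) l a p := by
      intro p
      have T2 : dOne (g.flat l) (fun μ => n μ + ((gt * gt + h * h) / 2) * l μ + gt * s μ + h * a μ) l p
          = dOne (g.flat l) n l p + gt p * dOne (g.flat l) s l p + h p * dOne (g.flat l) a l p := by
        have : dOne (g.flat l) (fun μ => n μ + ((gt * gt + h * h) / 2) * l μ + gt * s μ + h * a μ) l p
            = dOne (g.flat l) n l p + ((gt * gt + h * h) / 2) p * dOne (g.flat l) l l p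
              + gt p * dOne (g.flat l) s l p + h p * dOne (g.flat l) a l p := by
          simp only [dOne_apply, Pi.add_apply, Pi.mul_apply, Fin.sum_univ_four]
          ring
        rw [this, dOne_self]; ring
      have hflat : g.flat (fun μ => s μ + gt * l μ) = fun ν => g.flat s ν + gt * g.flat l ν :=
        flat_add_smul g gt s l
      have T3 : dOne (g.flat fun μ => s μ + gt * l μ) l (fun μ => s μ + gt * l μ) p
          = dOne (g.flat s) l s p + gt p * dOne (g.flat l) l s p := by
        rw [hflat]
        have hadd : dOne (fun ν => g.flat s ν + gt * g.flat l ν) l (fun μ => s μ + gt * l μ) p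
            = dOne (g.flat s) l (fun μ => s μ + gt * l μ) p
              + dOne (fun ν => gt * g.flat l ν) l (fun μ => s μ + gt * l μ) p :=
          dOne_add_left hss (fun ν => hgt.mul (hsl ν)) l _ p
        rw [hadd, dOne_add_smul_w, dOne_self, mul_zero, add_zero,
          dOne_smul_left g gt (g.flat l) hgt hsl]
        have e2 : (∑ ν, g.flat l ν p * (fun μ => s μ + gt * l μ) ν p) = 0 := by
          simp only [Pi.add_apply, Pi.mul_apply]
          rw [show (∑ ν, g.flat l ν p * (s ν p + gt p * l ν p))
              = (∑ ν, g.flat l ν p * s ν p) + gt p * ∑ ν, g.flat l ν p * l ν p by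
            rw [Finset.mul_sum, ← Finset.sum_add_distrib]
            exact Finset.sum_congr rfl fun ν _ => by ring]
          rw [Pls p, Pll p]; ring
        rw [e2, Pll p, dOne_add_smul_w, dOne_self]
        ring
      rw [T2, T3]
      have hanti1 : dOne (g.flat l) s l p = -dOne (g.flat l) l s p := dOne_antisymm _ _ _ p
      have hanti2 : dOne (g.flat l) a l p = -dOne (g.flat l) l a p := dOne_antisymm _ _ _ p
      rw [hanti1, hanti2]; ring
    constructor
    · rintro ⟨hA, hB⟩
      have hB' : condB g l a := by
        rw [condB_iff]; intro p
        rw [← hBeq p]; exact (condB_iff ..).mp hB p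
      refine ⟨?_, hB'⟩
      rw [condA_iff]; intro p
      have h1 := (condA_iff ..).mp hA p
      rw [hAeq p] at h1
      have h2 := (condB_iff ..).mp hB' p
      rw [h2] at h1; linarith [h1]
    · rintro ⟨hA, hB⟩
      have hB' : condB g l (fun μ => a μ + h * l μ) := by
        rw [condB_iff]; intro p
        rw [hBeq p]; exact (condB_iff ..).mp hB p
      refine ⟨?_, hB'⟩
      rw [condA_iff]; intro p
      rw [hAeq p, (condA_iff ..).mp hA p, (condB_iff ..).mp hB p]
      ring
end FFE
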